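/- arXiv:2211.15715 — 2 statements merged into one kernel-verified Lean document; each statement's English description precedes it below -/
import Mathlib

section
/- For any integers 1 ≤ k ≤ d there exists a constant c > 0 (depending only on d and k) such that for all integers n > k one has c · Δ_{k,d}(n) ≤ Δ'_{k,d}(n). -/
open scoped RealInnerProductSpace

/-- The Gram matrix of a collection of `k` vectors in `ℝ^d`. -/
noncomputable def gram {d k : ℕ} (v : Fin k → EuclideanSpace ℝ (Fin d)) :
    Matrix (Fin k) (Fin k) ℝ :=
  Matrix.of fun i j => ⟪v i, v j⟫

/-- `vol v` is the `k`-dimensional volume of the parallelepiped spanned by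
`v 1, …, v k`, i.e. the square root of the determinant of their Gram matrix.
For `k = 0` it equals `1`. -/
noncomputable def vol {d k : ℕ} (v : Fin k → EuclideanSpace ℝ (Fin d)) : ℝ :=
  Real.sqrt (gram v).det

/-- The `k`-dimensional volume of the simplex with vertices `p 0, …, p k`. -/
noncomputable def simplexVol {d k : ℕ} (p : Fin (k + 1) → EuclideanSpace ℝ (Fin d)) : ℝ :=
  (Nat.factorial k : ℝ)⁻¹ * vol (fun i : Fin k => p i.succ - p 0)

/-- The minimum, over all `(k+1)`-element subsets of `X`, of the `k`-dimensional
volume of the simplex they span. -/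
noncomputable def minSimplexVol (d k : ℕ) (X : Finset (EuclideanSpace ℝ (Fin d))) : ℝ :=
  sInf { v : ℝ | ∃ p : Fin (k + 1) → EuclideanSpace ℝ (Fin d),
    Function.Injective p ∧ (∀ i, p i ∈ X) ∧ v = simplexVol p }

/-- `Delta k d n` is the supremum, over all `n`-element subsets `X` of the unit cube
`[0,1]^d`, of the minimum `k`-dimensional simplex volume among `(k+1)`-element
subsets of `X`. -/
noncomputable def Delta (k d n : ℕ) : ℝ :=
  sSup { v : ℝ | ∃ X : Finset (EuclideanSpace ℝ (Fin d)), X.card = n ∧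
    (∀ x ∈ X, ∀ i, x i ∈ Set.Icc (0 : ℝ) 1) ∧ v = minSimplexVol d k X }

/-- The minimum, over all `(k+1)`-element subsets of `X ⊆ ℝ^{d+1}`, of the
determinant (parallelepiped volume) of the `k+1` chosen vectors. -/
noncomputable def minDet (d k : ℕ) (X : Finset (EuclideanSpace ℝ (Fin (d + 1)))) : ℝ :=
  sInf { v : ℝ | ∃ p : Fin (k + 1) → EuclideanSpace ℝ (Fin (d + 1)),
    Function.Injective p ∧ (∀ i, p i ∈ X) ∧ v = vol p }

/-- `Delta' k d n` is the supremum, over all `n`-element sets `X` of unit vectors in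
`ℝ^{d+1}`, of the minimum determinant among `(k+1)`-element subsets of `X`. -/
noncomputable def Delta' (k d n : ℕ) : ℝ :=
  sSup { v : ℝ | ∃ X : Finset (EuclideanSpace ℝ (Fin (d + 1))), X.card = n ∧
    (∀ x ∈ X, ‖x‖ = 1) ∧ v = minDet d k X }

open Matrix Finset

noncomputable def coordM {d k : ℕ} (v : Fin k → EuclideanSpace ℝ (Fin d)) :
    Matrix (Fin d) (Fin k) ℝ := Matrix.of fun j i => v i j

lemma gram_eq {d k : ℕ} (v : Fin k → EuclideanSpace ℝ (Fin d)) :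
    gram v = (coordM v)ᴴ * coordM v := by
  ext i i'
  simp [_root_.gram, coordM, Matrix.mul_apply, PiLp.inner_apply, RCLike.inner_apply, mul_comm]

lemma psd_det_nonneg {k : ℕ} {A : Matrix (Fin k) (Fin k) ℝ} (hA : A.PosSemidef) :
    0 ≤ A.det := by
  rw [hA.isHermitian.det_eq_prod_eigenvalues]
  exact Finset.prod_nonneg fun i _ => by simpa using hA.eigenvalues_nonneg i

noncomputable def lft {d : ℕ} (x : EuclideanSpace ℝ (Fin d)) : EuclideanSpace ℝ (Fin (d+1)) :=
  WithLp.toLp 2 (Fin.snoc (α := fun _ => ℝ) x.ofLp 1)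

section main
variable {d k : ℕ} (x : Fin (k+1) → EuclideanSpace ℝ (Fin d))

-- the elementary column-operation matrix
def EE (k : ℕ) : Matrix (Fin (k+1)) (Fin (k+1)) ℝ :=
  Matrix.of fun j i => if j = i then 1 else if j = 0 then -1 else 0

lemma det_EE (k : ℕ) : (EE k).det = 1 := by
  have h : ∀ i j : Fin (k+1), j < i → EE k i j = 0 := by
    intro i j hij
    simp only [EE, Matrix.of_apply]
    rw [if_neg hij.ne', if_neg (Fin.pos_iff_ne_zero.mp (lt_of_le_of_lt (Fin.zero_le j) hij))]
  rw [Matrix.det_of_upperTriangular h]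
  simp [EE]

-- column matrix of the differences, with x 0 in column 0
noncomputable def CC : Matrix (Fin d) (Fin (k+1)) ℝ :=
  Matrix.of fun j i => if i = 0 then x 0 j else (x i - x 0) j

lemma BE_apply (j : Fin (d+1)) (i : Fin (k+1)) :
    (coordM (fun i => lft (x i)) * EE k) j i
      = if i = 0 then lft (x 0) j else lft (x i) j - lft (x 0) j := by
  rw [Matrix.mul_apply]
  rcases eq_or_ne i 0 with hi | hi
  · subst hi
    rw [Finset.sum_eq_single 0]
    · simp [EE, coordM]
    · intro m _ hm; simp [EE, coordM, hm, Ne.symm hm]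
    · simp
  · rw [Finset.sum_eq_add_of_mem 0 i (by simp) (by simp) (Ne.symm hi)]
    · simp [EE, coordM, hi, Ne.symm hi]; ring
    · intro m _ hm
      simp only [EE, coordM, Matrix.of_apply]
      rcases hm with ⟨hm0, hmi⟩
      rw [if_neg (by exact fun h => hmi h), if_neg hm0, mul_zero]
end main

section main2
variable {d k : ℕ} (x : Fin (k+1) → EuclideanSpace ℝ (Fin d))

lemma M_eq :
    (coordM (fun i => lft (x i)) * EE k)ᴴ * (coordM (fun i => lft (x i)) * EE k)
      = ((CC x)ᴴ * (CC x)).updateRow 0 (((CC x)ᴴ * (CC x)) 0 + Pi.single 0 1) := by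
  ext i i'
  rw [Matrix.mul_apply]
  simp only [Matrix.conjTranspose_apply, star_trivial, BE_apply]
  rw [Fin.sum_univ_castSucc]
  rcases eq_or_ne i 0 with hi | hi <;> rcases eq_or_ne i' 0 with hi' | hi' <;>
    simp [hi, hi', Matrix.updateRow_apply, Matrix.mul_apply, Matrix.conjTranspose_apply,
      CC, lft, Pi.single_apply, Fin.snoc_castSucc, Fin.snoc_last, PiLp.sub_apply]
end main2

section main3
variable {d k : ℕ} (x : Fin (k+1) → EuclideanSpace ℝ (Fin d))

lemma sub_det_eq :
    ((((CC x)ᴴ * (CC x)).updateRow 0 (Pi.single 0 1)) : Matrix (Fin (k+1)) (Fin (k+1)) ℝ).det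
      = (gram (fun i : Fin k => x i.succ - x 0)).det := by
  rw [Matrix.det_succ_row_zero, Finset.sum_eq_single 0]
  · have hsub : ((((CC x)ᴴ * (CC x)).updateRow 0 (Pi.single 0 1)).submatrix Fin.succ
        (Fin.succAbove 0)) = gram (fun i : Fin k => x i.succ - x 0) := by
      ext i i'
      simp [Matrix.updateRow_apply, Fin.succ_ne_zero, Matrix.mul_apply,
        Matrix.conjTranspose_apply, CC, _root_.gram, PiLp.inner_apply, RCLike.inner_apply,
        PiLp.sub_apply, mul_comm]
    rw [hsub]
    simp
  · intro j _ hj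
    simp [Matrix.updateRow_self, Pi.single_apply, hj.symm]
  · simp
lemma det_gram_lft_ge :
    (gram (fun i : Fin k => x i.succ - x 0)).det ≤ (gram (fun i => lft (x i))).det := by
  have h1 : ((coordM (fun i => lft (x i)) * EE k)ᴴ * (coordM (fun i => lft (x i)) * EE k)).det
      = ((coordM (fun i => lft (x i)))ᴴ * coordM (fun i => lft (x i))).det := by
    rw [Matrix.conjTranspose_mul,
      Matrix.mul_assoc ((EE k)ᴴ) ((coordM (fun i => lft (x i)))ᴴ) _,
      ← Matrix.mul_assoc ((coordM (fun i => lft (x i)))ᴴ) _ (EE k),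
      Matrix.det_mul, Matrix.det_mul,
      Matrix.conjTranspose_eq_transpose_of_trivial, Matrix.det_transpose, det_EE]
    ring
  have hN : 0 ≤ ((CC x)ᴴ * (CC x)).det :=
    psd_det_nonneg (Matrix.posSemidef_conjTranspose_mul_self _)
  have key : ((coordM (fun i => lft (x i)) * EE k)ᴴ * (coordM (fun i => lft (x i)) * EE k)).det
      = ((CC x)ᴴ * (CC x)).det + (gram (fun i : Fin k => x i.succ - x 0)).det := by
    rw [M_eq, Matrix.det_updateRow_add, Matrix.updateRow_eq_self, sub_det_eq]
  rw [gram_eq (fun i => lft (x i)), ← h1, key]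
  linarith
end main3

section main4
variable {d : ℕ}

lemma lft_last (x : EuclideanSpace ℝ (Fin d)) : lft x (Fin.last d) = 1 :=
  show Fin.snoc (α := fun _ => ℝ) x.ofLp 1 (Fin.last d) = 1 from Fin.snoc_last _ _

lemma lft_ne_zero (x : EuclideanSpace ℝ (Fin d)) : lft x ≠ 0 := by
  intro h
  have := congrFun (congrArg (fun y : EuclideanSpace ℝ (Fin (d+1)) => (y : Fin (d+1) → ℝ)) h)
    (Fin.last d)
  simp [lft_last] at this

lemma norm_lft_sq (x : EuclideanSpace ℝ (Fin d)) :
    ‖lft x‖^2 = (∑ j, x j ^ 2) + 1 := by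
  rw [EuclideanSpace.norm_eq, Real.sq_sqrt (by positivity)]
  rw [Fin.sum_univ_castSucc]
  simp [lft, Fin.snoc_castSucc, Fin.snoc_last, sq_abs]

lemma one_le_norm_lft (x : EuclideanSpace ℝ (Fin d)) : 1 ≤ ‖lft x‖ := by
  have h := norm_lft_sq x
  nlinarith [norm_nonneg (lft x), Finset.sum_nonneg fun j (_ : j ∈ Finset.univ) => sq_nonneg (x j)]

lemma norm_lft_le (x : EuclideanSpace ℝ (Fin d)) (hx : ∀ j, x j ∈ Set.Icc (0:ℝ) 1) :
    ‖lft x‖ ≤ Real.sqrt (d + 1) := by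
  have hsum : (∑ j, x j ^ 2) ≤ d := by
    calc (∑ j, x j ^ 2) ≤ ∑ _j : Fin d, (1:ℝ) := by
          apply Finset.sum_le_sum
          intro j _
          obtain ⟨h0, h1⟩ := hx j
          nlinarith
      _ = d := by simp
  have h := norm_lft_sq x
  have : ‖lft x‖^2 ≤ d + 1 := by linarith
  calc ‖lft x‖ = Real.sqrt (‖lft x‖^2) := (Real.sqrt_sq (norm_nonneg _)).symm
    _ ≤ Real.sqrt (d+1) := Real.sqrt_le_sqrt this

noncomputable def gmap (x : EuclideanSpace ℝ (Fin d)) : EuclideanSpace ℝ (Fin (d+1)) :=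
  ‖lft x‖⁻¹ • lft x

lemma norm_gmap (x : EuclideanSpace ℝ (Fin d)) : ‖gmap x‖ = 1 := by
  rw [gmap, norm_smul, norm_inv, norm_norm, inv_mul_cancel₀]
  exact fun h => lft_ne_zero x (by simpa [h] using norm_eq_zero.mp h)

lemma gmap_injective : Function.Injective (gmap (d := d)) := by
  intro a b hab
  have hna : ‖lft a‖ ≠ 0 := norm_ne_zero_iff.mpr (lft_ne_zero a)
  have hnb : ‖lft b‖ ≠ 0 := norm_ne_zero_iff.mpr (lft_ne_zero b)
  have hlast : ∀ x : EuclideanSpace ℝ (Fin d), gmap x (Fin.last d) = ‖lft x‖⁻¹ := by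
    intro x
    show (‖lft x‖⁻¹ • lft x) (Fin.last d) = _
    simp [PiLp.smul_apply, lft_last]
  have hn : ‖lft a‖ = ‖lft b‖ := by
    have := congrFun (congrArg (fun y : EuclideanSpace ℝ (Fin (d+1)) => (y : Fin (d+1) → ℝ)) hab)
      (Fin.last d)
    have h2 : ‖lft a‖⁻¹ = ‖lft b‖⁻¹ := by rw [← hlast a, ← hlast b]; exact this
    exact inv_injective h2
  have hl : lft a = lft b := by
    have := congrArg (fun y => ‖lft a‖ • y) hab
    simpa [gmap, hn, smul_smul, mul_inv_cancel₀ hnb] using this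
  ext j
  have := congrFun (congrArg (fun y : EuclideanSpace ℝ (Fin (d+1)) => (y : Fin (d+1) → ℝ)) hl)
    (Fin.castSucc j)
  simpa [lft, Fin.snoc_castSucc] using this
end main4

lemma gram_smul {d k : ℕ} (v : Fin k → EuclideanSpace ℝ (Fin d)) (c : Fin k → ℝ) :
    gram (fun i => c i • v i) = Matrix.diagonal c * gram v * Matrix.diagonal c := by
  ext i j
  simp [_root_.gram, Matrix.mul_apply, Matrix.diagonal_apply, real_inner_smul_left,
    real_inner_smul_right, Finset.sum_ite_eq, Finset.sum_ite_eq', Finset.mul_sum,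
    Finset.sum_mul]
  ring

lemma vol_smul {d k : ℕ} (v : Fin k → EuclideanSpace ℝ (Fin d)) (c : Fin k → ℝ)
    (hc : ∀ i, 0 ≤ c i) :
    vol (fun i => c i • v i) = (∏ i, c i) * vol v := by
  unfold vol
  rw [gram_smul, Matrix.det_mul, Matrix.det_mul, Matrix.det_diagonal]
  have hp : 0 ≤ ∏ i, c i := Finset.prod_nonneg fun i _ => hc i
  rw [mul_comm _ (∏ i, c i), ← mul_assoc, ← sq,
    Real.sqrt_mul (sq_nonneg _), Real.sqrt_sq hp]

lemma key_ineq {d k : ℕ} (x : Fin (k+1) → EuclideanSpace ℝ (Fin d))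
    (hx : ∀ i j, x i j ∈ Set.Icc (0:ℝ) 1) :
    ((Real.sqrt (d+1)) ^ (k+1))⁻¹ * ((Nat.factorial k : ℕ) : ℝ) * simplexVol x
      ≤ vol (fun i => gmap (x i)) := by
  have hvol : vol (fun i => gmap (x i))
      = (∏ i, ‖lft (x i)‖⁻¹) * vol (fun i => lft (x i)) :=
    vol_smul _ _ (fun i => inv_nonneg.mpr (norm_nonneg _))
  have h1 : vol (fun i : Fin k => x i.succ - x 0) ≤ vol (fun i => lft (x i)) :=
    Real.sqrt_le_sqrt (det_gram_lft_ge x)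
  have hfac : ((Nat.factorial k : ℕ) : ℝ) * simplexVol x
      = vol (fun i : Fin k => x i.succ - x 0) := by
    rw [simplexVol, ← mul_assoc, mul_inv_cancel₀ (by positivity), one_mul]
  have hprod : ((Real.sqrt (d+1)) ^ (k+1))⁻¹ ≤ ∏ i, ‖lft (x i)‖⁻¹ := by
    have h2 : ∀ i : Fin (k+1), (Real.sqrt (d+1))⁻¹ ≤ ‖lft (x i)‖⁻¹ := by
      intro i
      have h3 : (0:ℝ) < ‖lft (x i)‖ := lt_of_lt_of_le one_pos (one_le_norm_lft _)
      exact inv_anti₀ h3 (norm_lft_le _ (hx i))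
    calc ((Real.sqrt (d+1)) ^ (k+1))⁻¹ = ∏ _i : Fin (k+1), (Real.sqrt (d+1))⁻¹ := by
          rw [Finset.prod_const, ← inv_pow]; simp
      _ ≤ ∏ i, ‖lft (x i)‖⁻¹ :=
          Finset.prod_le_prod (fun i _ => inv_nonneg.mpr (Real.sqrt_nonneg _))
            (fun i _ => h2 i)
  rw [hvol, mul_assoc, hfac]
  exact mul_le_mul hprod h1 (Real.sqrt_nonneg _)
    (Finset.prod_nonneg fun i _ => inv_nonneg.mpr (norm_nonneg _))

lemma vol_le_bound {d k : ℕ} (v : Fin (k+1) → EuclideanSpace ℝ (Fin d))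
    (hv : ∀ i, ‖v i‖ = 1) : vol v ≤ Real.sqrt ((Nat.factorial (k+1)) : ℝ) := by
  apply Real.sqrt_le_sqrt
  have h := Matrix.det_le (A := gram v) (abv := AbsoluteValue.abs) (x := 1) ?_
  · calc (gram v).det ≤ |(gram v).det| := le_abs_self _
      _ ≤ _ := by simpa using h
  · intro i j
    simp only [_root_.gram, Matrix.of_apply, AbsoluteValue.abs_apply]
    calc |⟪v i, v j⟫| ≤ ‖v i‖ * ‖v j‖ := abs_real_inner_le_norm _ _
      _ = 1 := by rw [hv, hv, mul_one]


lemma vol_nonneg {d k : ℕ} (v : Fin k → EuclideanSpace ℝ (Fin d)) : 0 ≤ vol v :=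
  Real.sqrt_nonneg _

lemma simplexVol_nonneg {d k : ℕ} (p : Fin (k+1) → EuclideanSpace ℝ (Fin d)) :
    0 ≤ simplexVol p := mul_nonneg (by positivity) (vol_nonneg _)

lemma exists_inj {α : Type*} (X : Finset α) (m : ℕ) (h : m ≤ X.card) :
    ∃ p : Fin m → α, Function.Injective p ∧ ∀ i, p i ∈ X := by
  classical
  obtain ⟨Y, hYX, hY⟩ := Finset.exists_subset_card_eq h
  let e : {x // x ∈ Y} ≃ Fin m := Y.equivFin.trans (finCongr hY)
  refine ⟨fun i => (e.symm i : α), ?_, fun i => hYX (e.symm i).2⟩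
  intro i j hij
  exact e.symm.injective (Subtype.coe_injective hij)

lemma minSimplexVol_bddBelow (d k : ℕ) (X : Finset (EuclideanSpace ℝ (Fin d))) :
    BddBelow { v : ℝ | ∃ p : Fin (k + 1) → EuclideanSpace ℝ (Fin d),
      Function.Injective p ∧ (∀ i, p i ∈ X) ∧ v = simplexVol p } :=
  ⟨0, by rintro v ⟨p, -, -, rfl⟩; exact simplexVol_nonneg p⟩

lemma minSimplexVol_le {d k : ℕ} {X : Finset (EuclideanSpace ℝ (Fin d))}
    {p : Fin (k+1) → EuclideanSpace ℝ (Fin d)} (hp : Function.Injective p)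
    (hm : ∀ i, p i ∈ X) : minSimplexVol d k X ≤ simplexVol p :=
  csInf_le (minSimplexVol_bddBelow d k X) ⟨p, hp, hm, rfl⟩

lemma minSimplexVol_nonneg (d k : ℕ) (X : Finset (EuclideanSpace ℝ (Fin d)))
    (hX : k + 1 ≤ X.card) : 0 ≤ minSimplexVol d k X := by
  obtain ⟨p, hpi, hpm⟩ := exists_inj X (k+1) hX
  exact le_csInf ⟨simplexVol p, p, hpi, hpm, rfl⟩
    (by rintro v ⟨q, -, -, rfl⟩; exact simplexVol_nonneg q)

lemma minDet_bddBelow (d k : ℕ) (X : Finset (EuclideanSpace ℝ (Fin (d+1)))) :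
    BddBelow { v : ℝ | ∃ p : Fin (k + 1) → EuclideanSpace ℝ (Fin (d + 1)),
      Function.Injective p ∧ (∀ i, p i ∈ X) ∧ v = vol p } :=
  ⟨0, by rintro v ⟨p, -, -, rfl⟩; exact vol_nonneg p⟩

open scoped Classical in
lemma compare {d k : ℕ} (X : Finset (EuclideanSpace ℝ (Fin d))) (hcard : k + 1 ≤ X.card)
    (hcube : ∀ x ∈ X, ∀ i, x i ∈ Set.Icc (0:ℝ) 1) :
    ((Real.sqrt (d+1)) ^ (k+1))⁻¹ * (Nat.factorial k : ℝ) * minSimplexVol d k X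
      ≤ minDet d k (X.image gmap) := by
  apply le_csInf
  · have hc : k + 1 ≤ (X.image gmap).card := by
      rw [Finset.card_image_of_injective _ gmap_injective]; exact hcard
    obtain ⟨p, hpi, hpm⟩ := exists_inj _ _ hc
    exact ⟨vol p, p, hpi, hpm, rfl⟩
  · rintro b ⟨p, hpi, hpm, rfl⟩
    have hch : ∀ i, ∃ a, a ∈ X ∧ gmap a = p i := by
      intro i
      obtain ⟨a, ha, hga⟩ := Finset.mem_image.mp (hpm i)
      exact ⟨a, ha, hga⟩
    choose q hqX hqg using hch
    have hqi : Function.Injective q := fun i j h => hpi (by rw [← hqg, ← hqg, h])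
    have h1 : minSimplexVol d k X ≤ simplexVol q := minSimplexVol_le hqi hqX
    have h2 := key_ineq q (fun i j => hcube (q i) (hqX i) j)
    rw [funext hqg] at h2
    calc ((Real.sqrt (d+1)) ^ (k+1))⁻¹ * (Nat.factorial k : ℝ) * minSimplexVol d k X
        ≤ ((Real.sqrt (d+1)) ^ (k+1))⁻¹ * (Nat.factorial k : ℝ) * simplexVol q :=
          mul_le_mul_of_nonneg_left h1 (by positivity)
      _ ≤ vol p := h2

lemma delta'_bdd (k d n : ℕ) (hn : k + 1 ≤ n) :
    ∀ v ∈ {v : ℝ | ∃ X : Finset (EuclideanSpace ℝ (Fin (d + 1))), X.card = n ∧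
      (∀ x ∈ X, ‖x‖ = 1) ∧ v = minDet d k X},
      v ≤ Real.sqrt (Nat.factorial (k+1) : ℝ) := by
  rintro v ⟨X, hcard, hunit, rfl⟩
  obtain ⟨p, hpi, hpm⟩ := exists_inj X (k+1) (by rw [hcard]; exact hn)
  calc minDet d k X ≤ vol p := csInf_le (minDet_bddBelow d k X) ⟨p, hpi, hpm, rfl⟩
    _ ≤ _ := vol_le_bound p (fun i => hunit _ (hpm i))

lemma exists_cube_finset (d n : ℕ) (hd : 0 < d) :
    ∃ X : Finset (EuclideanSpace ℝ (Fin d)), X.card = n ∧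
      ∀ x ∈ X, ∀ i, x i ∈ Set.Icc (0:ℝ) 1 := by
  classical
  set f : ℕ → EuclideanSpace ℝ (Fin d) :=
    fun t => WithLp.toLp 2 (fun j => if (j:ℕ) = 0 then (t:ℝ)/(n+1) else 0) with hf
  refine ⟨(Finset.range n).image f, ?_, ?_⟩
  · rw [Finset.card_image_of_injOn, Finset.card_range]
    intro a _ b _ hab
    have h0 := congrFun (congrArg
      (fun y : EuclideanSpace ℝ (Fin d) => (y : Fin d → ℝ)) hab) ⟨0, hd⟩
    simp only [hf, PiLp.toLp_apply, Fin.val_mk, eq_self_iff_true, if_true] at h0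
    have hne : ((n:ℝ)+1) ≠ 0 := by positivity
    field_simp at h0
    exact_mod_cast h0
  · intro x hx i
    obtain ⟨t, ht, rfl⟩ := Finset.mem_image.mp hx
    have ht' : (t:ℝ) ≤ n := by
      exact_mod_cast Nat.le_of_lt (Finset.mem_range.mp ht)
    by_cases hi : (i:ℕ) = 0 <;> simp only [hf, PiLp.toLp_apply, hi, if_true, if_false, reduceIte]
    · constructor
      · positivity
      · rw [div_le_one (by positivity)]; linarith
    · simp [hi]

/-- **Proposition 2 (first inequality of the reduction).** For `1 ≤ k ≤ d` there is a
constant `c > 0` (depending only on `d` and `k`) such that for all `n > k`,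
`c · Δ_{k,d}(n) ≤ Δ'_{k,d}(n)`. -/
theorem reduction_lower (k d : ℕ) (hk : 1 ≤ k) (hkd : k ≤ d) :
    ∃ c : ℝ, 0 < c ∧ ∀ n : ℕ, k < n → c * Delta k d n ≤ Delta' k d n := by
  classical
  have hd : 0 < d := lt_of_lt_of_le hk hkd
  have hsq : (0:ℝ) < Real.sqrt (d+1) := Real.sqrt_pos.mpr (by positivity)
  set c : ℝ := ((Real.sqrt (d+1)) ^ (k+1))⁻¹ * (Nat.factorial k : ℝ) with hc
  have hcpos : 0 < c := by
    apply mul_pos (by positivity)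
    exact_mod_cast Nat.factorial_pos k
  refine ⟨c, hcpos, ?_⟩
  intro n hn
  have hn' : k + 1 ≤ n := hn
  set S : Set ℝ := { v : ℝ | ∃ X : Finset (EuclideanSpace ℝ (Fin d)), X.card = n ∧
    (∀ x ∈ X, ∀ i, x i ∈ Set.Icc (0 : ℝ) 1) ∧ v = minSimplexVol d k X } with hS
  set S' : Set ℝ := { v : ℝ | ∃ X : Finset (EuclideanSpace ℝ (Fin (d + 1))), X.card = n ∧
    (∀ x ∈ X, ‖x‖ = 1) ∧ v = minDet d k X } with hS'
  have hbdd' : BddAbove S' := ⟨Real.sqrt (Nat.factorial (k+1) : ℝ), delta'_bdd k d n hn'⟩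
  have himg : ∀ X : Finset (EuclideanSpace ℝ (Fin d)), X.card = n →
      (∀ x ∈ X, ∀ i, x i ∈ Set.Icc (0 : ℝ) 1) → minDet d k (X.image gmap) ∈ S' := by
    intro X hcard hcube
    refine ⟨X.image gmap, ?_, ?_, rfl⟩
    · rw [Finset.card_image_of_injective _ gmap_injective]; exact hcard
    · intro x hx
      obtain ⟨a, _, rfl⟩ := Finset.mem_image.mp hx
      exact norm_gmap a
  have hkey : ∀ v ∈ S, c * v ≤ sSup S' := by
    rintro v ⟨X, hcard, hcube, rfl⟩
    calc c * minSimplexVol d k X ≤ minDet d k (X.image gmap) :=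
          compare X (hcard ▸ hn') hcube
      _ ≤ sSup S' := le_csSup hbdd' (himg X hcard hcube)
  obtain ⟨X0, hX0card, hX0cube⟩ := exists_cube_finset d n hd
  have hS'nonneg : 0 ≤ sSup S' := by
    have h1 : 0 ≤ c * minSimplexVol d k X0 :=
      mul_nonneg hcpos.le (minSimplexVol_nonneg d k X0 (hX0card ▸ hn'))
    exact le_trans h1 (hkey _ ⟨X0, hX0card, hX0cube, rfl⟩)
  have hfin : Delta k d n ≤ sSup S' / c := by
    apply Real.sSup_le
    · intro v hv
      rw [le_div_iff₀ hcpos, mul_comm]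
      exact hkey v hv
    · exact div_nonneg hS'nonneg hcpos.le
  have := (le_div_iff₀ hcpos).mp hfin
  calc c * Delta k d n = Delta k d n * c := mul_comm _ _
    _ ≤ sSup S' := this
    _ = Delta' k d n := rfl
end

section
/- For every integer d ≥ 1 there exists a constant c' > 0 (depending only on d) such that for every nonempty finite set Y of unit vectors in ℝ^{d+1} there exists a rotation R ∈ SO(d+1) with the following property: at least c'·|Y| of the points y ∈ Y satisfy (Ry)_{d+1} > 0 and the central projection Ry/(Ry)_{d+1} of Ry onto the hyperplane {x ∈ ℝ^{d+1} : x_{d+1} = 1} lies in the cube [0,1]^d × {1}. -/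
open scoped Matrix

lemma aux_coord_le_norm (m : ℕ) (x : EuclideanSpace ℝ (Fin m)) (i : Fin m) : |x i| ≤ ‖x‖ := by
  rw [EuclideanSpace.norm_eq, ← Real.sqrt_sq_eq_abs]
  apply Real.sqrt_le_sqrt
  have : (x i)^2 ≤ ∑ j, ‖x j‖^2 := by
    have := Finset.single_le_sum (f := fun j => ‖x j‖^2) (fun j _ => by positivity)
      (Finset.mem_univ i)
    simpa [sq_abs] using this
  simpa using this

lemma aux_exists_isometry (n : ℕ) (hn : 2 ≤ n) (u v : EuclideanSpace ℝ (Fin n))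
    (hu : ‖u‖ = 1) (hv : ‖v‖ = 1) :
    ∃ f : EuclideanSpace ℝ (Fin n) ≃ₗᵢ[ℝ] EuclideanSpace ℝ (Fin n),
      f u = v ∧ LinearMap.det f.toLinearEquiv.toLinearMap = 1 := by
  by_cases huv : u = v
  · exact ⟨LinearIsometryEquiv.refl ℝ _, by simp [huv], by
      have : (LinearIsometryEquiv.refl ℝ (EuclideanSpace ℝ (Fin n))).toLinearEquiv.toLinearMap
          = LinearMap.id := rfl
      rw [this, LinearMap.det_id]⟩
  · have hfr : Module.finrank ℝ (EuclideanSpace ℝ (Fin n)) = n := by simp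
    have hvne : v ≠ 0 := by intro h; rw [h] at hv; simp at hv
    have hdim : Module.finrank ℝ ((ℝ ∙ v)ᗮ : Submodule ℝ (EuclideanSpace ℝ (Fin n))) = n - 1 := by
      have := Submodule.finrank_add_finrank_orthogonal (K := (ℝ ∙ v))
      rw [finrank_span_singleton hvne, hfr] at this
      omega
    have hbot : ((ℝ ∙ v)ᗮ : Submodule ℝ (EuclideanSpace ℝ (Fin n))) ≠ ⊥ := by
      intro h
      rw [h] at hdim
      simp at hdim
      omega
    obtain ⟨w, hw, hwne⟩ := Submodule.exists_mem_ne_zero_of_ne_bot hbot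
    have hwv : v ∈ ((ℝ ∙ w)ᗮ : Submodule ℝ (EuclideanSpace ℝ (Fin n))) := by
      rw [Submodule.mem_orthogonal_singleton_iff_inner_right]
      rw [Submodule.mem_orthogonal_singleton_iff_inner_left] at hw
      exact hw
    set r1 := Submodule.reflection ((ℝ ∙ (u - v))ᗮ : Submodule ℝ (EuclideanSpace ℝ (Fin n)))
    set r2 := Submodule.reflection ((ℝ ∙ w)ᗮ : Submodule ℝ (EuclideanSpace ℝ (Fin n)))
    refine ⟨r1.trans r2, ?_, ?_⟩
    · have h1 : r1 u = v := Submodule.reflection_sub (by rw [hu, hv])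
      have h2 : r2 v = v := Submodule.reflection_mem_subspace_eq_self hwv
      simp [LinearIsometryEquiv.trans_apply, h1, h2]
    · have hc : (r1.trans r2).toLinearEquiv.toLinearMap
          = r2.toLinearEquiv.toLinearMap ∘ₗ r1.toLinearEquiv.toLinearMap := rfl
      rw [hc, LinearMap.det_comp]
      have hdr : ∀ z : EuclideanSpace ℝ (Fin n), z ≠ 0 →
          LinearMap.det
            (Submodule.reflection ((ℝ ∙ z)ᗮ : Submodule ℝ (EuclideanSpace ℝ (Fin n)))).toLinearMap
            = -1 := by
        intro z hz
        rw [Submodule.det_reflection, Submodule.orthogonal_orthogonal, finrank_span_singleton hz]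
        simp
      rw [hdr _ (sub_ne_zero.mpr huv), hdr _ hwne]
      norm_num

lemma aux_exists_SO (n : ℕ) (f : EuclideanSpace ℝ (Fin n) ≃ₗᵢ[ℝ] EuclideanSpace ℝ (Fin n))
    (hdet : LinearMap.det f.toLinearEquiv.toLinearMap = 1) :
    ∃ R : Matrix.specialOrthogonalGroup (Fin n) ℝ,
      ∀ y : EuclideanSpace ℝ (Fin n),
        (R : Matrix (Fin n) (Fin n) ℝ).mulVec (fun i => y i) = fun i => f y i := by
  set M : Matrix (Fin n) (Fin n) ℝ := Matrix.toEuclideanLin.symm f.toLinearEquiv.toLinearMap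
    with hM
  have hML : Matrix.toEuclideanLin M = f.toLinearEquiv.toLinearMap := by
    simp [hM]
  have hadj : LinearMap.adjoint f.toLinearEquiv.toLinearMap ∘ₗ f.toLinearEquiv.toLinearMap
      = LinearMap.id := by
    apply LinearMap.ext
    intro x
    apply ext_inner_right ℝ
    intro y
    rw [LinearMap.comp_apply, LinearMap.adjoint_inner_left]
    simpa using f.inner_map_map x y
  have hmul : ∀ A B : Matrix (Fin n) (Fin n) ℝ, Matrix.toEuclideanLin (A * B) =
      Matrix.toEuclideanLin A ∘ₗ Matrix.toEuclideanLin B := by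
    intro A B
    rw [Matrix.toEuclideanLin_eq_toLin_orthonormal]
    exact Matrix.toLin_mul _ _ _ A B
  have hone : Matrix.toEuclideanLin (1 : Matrix (Fin n) (Fin n) ℝ) = LinearMap.id := by
    rw [Matrix.toEuclideanLin_eq_toLin_orthonormal]
    exact Matrix.toLin_one _
  have horth : M ∈ Matrix.orthogonalGroup (Fin n) ℝ := by
    rw [Matrix.mem_orthogonalGroup_iff']
    apply Matrix.toEuclideanLin.injective
    rw [hmul, hone, ← Matrix.conjTranspose_eq_transpose_of_trivial,
      Matrix.toEuclideanLin_conjTranspose_eq_adjoint, hML, hadj]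
  have hdetM : M.det = 1 := by
    have : M = LinearMap.toMatrix (EuclideanSpace.basisFun (Fin n) ℝ).toBasis
        (EuclideanSpace.basisFun (Fin n) ℝ).toBasis f.toLinearEquiv.toLinearMap := by
      rw [hM, Matrix.toEuclideanLin_eq_toLin_orthonormal]
      rfl
    rw [this, LinearMap.det_toMatrix, hdet]
  refine ⟨⟨M, Matrix.mem_specialOrthogonalGroup_iff.mpr ⟨horth, hdetM⟩⟩, ?_⟩
  intro y
  have h := Matrix.ofLp_toEuclideanLin_apply M y
  rw [hML] at h
  funext i
  have h2 := congrFun h i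
  simpa using h2.symm

/-- For every `d ≥ 1` there is a constant `c' > 0` depending only on `d` such that for
every nonempty finite set `Y` of unit vectors in `ℝ^{d+1}` there is a rotation
`R ∈ SO(d+1)` such that at least `c' · |Y|` of the points `y ∈ Y` satisfy
`(R y)_{d+1} > 0` and the central projection `R y / (R y)_{d+1}` onto the hyperplane
`{x : x_{d+1} = 1}` lies in the cube `[0,1]^d × {1}`. -/
theorem random_rotation_projection (d : ℕ) (hd : 1 ≤ d) :
    ∃ c' : ℝ, 0 < c' ∧
      ∀ Y : Finset (EuclideanSpace ℝ (Fin (d + 1))), Y.Nonempty →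
        (∀ y ∈ Y, ‖y‖ = 1) →
        ∃ R : Matrix.specialOrthogonalGroup (Fin (d + 1)) ℝ,
          c' * (Y.card : ℝ) ≤
            (Set.ncard {y : EuclideanSpace ℝ (Fin (d + 1)) | y ∈ Y ∧
              0 < ((R : Matrix (Fin (d + 1)) (Fin (d + 1)) ℝ).mulVec (fun i => y i))
                    (Fin.last d) ∧
              ∀ i : Fin d,
                ((R : Matrix (Fin (d + 1)) (Fin (d + 1)) ℝ).mulVec (fun i => y i)) i.castSucc /
                    ((R : Matrix (Fin (d + 1)) (Fin (d + 1)) ℝ).mulVec (fun i => y i))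
                      (Fin.last d) ∈
                  Set.Icc (0 : ℝ) 1} : ℝ) := by
  classical
  set E := EuclideanSpace ℝ (Fin (d + 1))
  set s : ℝ := Real.sqrt (d + 4) with hs
  have hs0 : 0 < s := Real.sqrt_pos.mpr (by positivity)
  set ε : ℝ := 1 / (2 * s) with hε
  have hε0 : 0 < ε := by positivity
  set v : E := (WithLp.equiv 2 (Fin (d + 1) → ℝ)).symm
    (fun i => if i = Fin.last d then 2 / s else 1 / s) with hvdef
  have hvi : ∀ i, v i = if i = Fin.last d then 2 / s else 1 / s := fun i => rfl
  have hvnorm : ‖v‖ = 1 := by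
    rw [EuclideanSpace.norm_eq]
    have : ∑ i : Fin (d + 1), ‖v i‖ ^ 2 = 1 := by
      rw [Fin.sum_univ_castSucc]
      have h1 : ∀ i : Fin d, ‖v i.castSucc‖ ^ 2 = 1 / s ^ 2 := by
        intro i
        rw [hvi, if_neg (Fin.castSucc_lt_last i).ne]
        rw [Real.norm_eq_abs, sq_abs]
        field_simp
      rw [Finset.sum_congr rfl (fun i _ => h1 i), Finset.sum_const, Finset.card_univ,
        Fintype.card_fin, hvi, if_pos rfl]
      have hsq : s ^ 2 = (d : ℝ) + 4 := Real.sq_sqrt (by positivity)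
      rw [Real.norm_eq_abs, sq_abs]
      field_simp
      rw [hsq]
      have : (4:ℝ) + d ≠ 0 := by positivity
      have : (d:ℝ) + 4 ≠ 0 := by positivity
      rw [nsmul_eq_mul]; field_simp
      ring
    rw [this, Real.sqrt_one]
  -- membership in the good region for points near v
  have hgood : ∀ z : E, ‖z - v‖ < ε →
      0 < z (Fin.last d) ∧ ∀ i : Fin d, z i.castSucc / z (Fin.last d) ∈ Set.Icc (0:ℝ) 1 := by
    intro z hz
    have hco : ∀ j, |z j - v j| < ε := by
      intro j
      exact lt_of_le_of_lt (by have h := aux_coord_le_norm (d+1) (z - v) j; exact h) hz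
    have e1 : 3 / (2 * s) = 2 / s - 1 / (2 * s) := by field_simp; ring
    have e2 : 1 / s - 1 / (2 * s) = 1 / (2 * s) := by field_simp; ring
    have e3 : 1 / s + 1 / (2 * s) = 3 / (2 * s) := by field_simp; ring
    have hpos2 : (0:ℝ) < 1 / (2 * s) := by positivity
    have hlast : 3 / (2 * s) < z (Fin.last d) := by
      have h1 := hco (Fin.last d)
      rw [hvi, if_pos rfl, hε] at h1
      have h := abs_lt.mp h1
      linarith [h.1]
    have hlast0 : 0 < z (Fin.last d) := lt_trans (by positivity) hlast
    refine ⟨hlast0, fun i => ?_⟩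
    have hci := hco i.castSucc
    rw [hvi, if_neg (Fin.castSucc_lt_last i).ne, hε] at hci
    have h := abs_lt.mp hci
    have hup : z i.castSucc < 3 / (2 * s) := by linarith [h.2]
    have hlo : 0 < z i.castSucc := by linarith [h.1]
    constructor
    · positivity
    · rw [div_le_one hlast0]
      exact le_of_lt (lt_trans hup hlast)
  -- compact sphere, finite subcover
  have hcompact : IsCompact (Metric.sphere (0 : E) 1) := isCompact_sphere _ _
  have hcover : Metric.sphere (0 : E) 1 ⊆ ⋃ c ∈ Metric.sphere (0 : E) 1, Metric.ball c ε := by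
    intro x hx
    exact Set.mem_biUnion hx (Metric.mem_ball_self hε0)
  obtain ⟨b', hb'sub, hb'fin, hb'cov⟩ := hcompact.elim_finite_subcover_image
    (fun c _ => Metric.isOpen_ball) hcover
  set t : Finset E := hb'fin.toFinset with htdef
  have htsub : ∀ c ∈ t, c ∈ Metric.sphere (0 : E) 1 := by
    intro c hc
    exact hb'sub (hb'fin.mem_toFinset.mp hc)
  have htcov : ∀ x ∈ Metric.sphere (0 : E) 1, ∃ c ∈ t, x ∈ Metric.ball c ε := by
    intro x hx
    obtain ⟨c, hc, hxc⟩ := Set.mem_iUnion₂.mp (hb'cov hx)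
    exact ⟨c, hb'fin.mem_toFinset.mpr hc, hxc⟩
  have htne : t.Nonempty := by
    have hv1 : v ∈ Metric.sphere (0 : E) 1 := by
      rw [mem_sphere_zero_iff_norm]; exact hvnorm
    obtain ⟨c, hc, _⟩ := htcov v hv1
    exact ⟨c, hc⟩
  have htcard : 0 < t.card := Finset.card_pos.mpr htne
  refine ⟨1 / t.card, by positivity, ?_⟩
  intro Y hYne hYnorm
  -- pigeonhole
  have hYsphere : ∀ y ∈ Y, y ∈ Metric.sphere (0 : E) 1 := by
    intro y hy
    rw [mem_sphere_zero_iff_norm]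
    exact hYnorm y hy
  have hYsub : Y ⊆ t.biUnion (fun c => Y.filter (fun y => y ∈ Metric.ball c ε)) := by
    intro y hy
    obtain ⟨c, hc, hyc⟩ := htcov y (hYsphere y hy)
    exact Finset.mem_biUnion.mpr ⟨c, hc, Finset.mem_filter.mpr ⟨hy, hyc⟩⟩
  have hsum : (Y.card : ℝ) ≤ ∑ c ∈ t, ((Y.filter (fun y => y ∈ Metric.ball c ε)).card : ℝ) := by
    have h1 : Y.card ≤ ∑ c ∈ t, (Y.filter (fun y => y ∈ Metric.ball c ε)).card :=
      le_trans (Finset.card_le_card hYsub) Finset.card_biUnion_le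
    exact_mod_cast h1
  have hpigeon : ∃ c ∈ t, (Y.card : ℝ) / t.card ≤
      ((Y.filter (fun y => y ∈ Metric.ball c ε)).card : ℝ) := by
    by_contra hnot
    push_neg at hnot
    have : ∑ c ∈ t, ((Y.filter (fun y => y ∈ Metric.ball c ε)).card : ℝ)
        < ∑ _c ∈ t, (Y.card : ℝ) / t.card := Finset.sum_lt_sum_of_nonempty htne hnot
    rw [Finset.sum_const, nsmul_eq_mul] at this
    have htc : (t.card : ℝ) ≠ 0 := by positivity
    rw [mul_div_cancel₀ _ htc] at this
    linarith
  obtain ⟨c, hct, hcard⟩ := hpigeon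
  have hcnorm : ‖c‖ = 1 := mem_sphere_zero_iff_norm.mp (htsub c hct)
  obtain ⟨f, hfc, hfdet⟩ := aux_exists_isometry (d + 1) (by omega) c v hcnorm hvnorm
  obtain ⟨R, hR⟩ := aux_exists_SO (d + 1) f hfdet
  refine ⟨R, ?_⟩
  set S : Set E := {y : E | y ∈ Y ∧
      0 < ((R : Matrix (Fin (d + 1)) (Fin (d + 1)) ℝ).mulVec (fun i => y i)) (Fin.last d) ∧
      ∀ i : Fin d,
        ((R : Matrix (Fin (d + 1)) (Fin (d + 1)) ℝ).mulVec (fun i => y i)) i.castSucc /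
            ((R : Matrix (Fin (d + 1)) (Fin (d + 1)) ℝ).mulVec (fun i => y i)) (Fin.last d) ∈
          Set.Icc (0 : ℝ) 1} with hSdef
  have hFS : (↑(Y.filter (fun y => y ∈ Metric.ball c ε)) : Set E) ⊆ S := by
    intro y hy
    rw [Finset.coe_filter] at hy
    obtain ⟨hyY, hyb⟩ := hy
    have hdist : ‖f y - v‖ < ε := by
      rw [← hfc, ← map_sub, f.norm_map]
      rw [Metric.mem_ball, dist_eq_norm] at hyb
      exact hyb
    obtain ⟨hpos, hbox⟩ := hgood (f y) hdist
    rw [hSdef]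
    refine ⟨hyY, ?_, ?_⟩
    · rw [hR y]; exact hpos
    · intro i; rw [hR y]; exact hbox i
  have hSY : S ⊆ (↑Y : Set E) := fun y hy => hy.1
  have hSfin : S.Finite := Set.Finite.subset Y.finite_toSet hSY
  have hle : ((Y.filter (fun y => y ∈ Metric.ball c ε)).card : ℝ) ≤ (S.ncard : ℝ) := by
    have h1 : (↑(Y.filter (fun y => y ∈ Metric.ball c ε)) : Set E).ncard ≤ S.ncard :=
      Set.ncard_le_ncard hFS hSfin
    rw [Set.ncard_coe_finset] at h1
    exact_mod_cast h1
  calc 1 / (t.card : ℝ) * Y.card = (Y.card : ℝ) / t.card := by ring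
    _ ≤ _ := hcard
    _ ≤ _ := hle
end
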